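/- The function f(θ) = (π/6 − θ + sin(2θ)/2) / ((1 + cos θ)²/√3) on the interval [0, π/6] attains its maximum at the unique interior critical point θ* satisfying f'(θ*) = 0, and f is strictly increasing on [0, θ*] and strictly decreasing on [θ*, π/6]. -/

import Mathlib

open Real Set

/-- The covered-fraction function from Croft's construction for one color. -/
noncomputable def croftFrac (θ : ℝ) : ℝ :=
  (π / 6 - θ + Real.sin (2 * θ) / 2) / ((1 + Real.cos θ) ^ 2 / Real.sqrt 3)

lemma croft_hasDerivAt (θ : ℝ) (h : 1 + Real.cos θ ≠ 0) :
    HasDerivAt croftFrac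
      (2 * Real.sqrt 3 * Real.sin θ * (π / 6 - θ - Real.sin θ) / (1 + Real.cos θ) ^ 3) θ := by
  have hs3 : Real.sqrt 3 ≠ 0 := by positivity
  have hN : HasDerivAt (fun θ : ℝ => π / 6 - θ + Real.sin (2 * θ) / 2)
      (-1 + Real.cos (2 * θ) * 2 / 2) θ := by
    have h1 : HasDerivAt (fun θ : ℝ => π / 6 - θ) (-1) θ := by
      simpa using (hasDerivAt_id θ).const_sub (π / 6)
    have h2 : HasDerivAt (fun θ : ℝ => Real.sin (2 * θ)) (Real.cos (2 * θ) * 2) θ := by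
      have := (Real.hasDerivAt_sin (2 * θ)).comp θ ((hasDerivAt_id θ).const_mul 2)
      simpa [Function.comp_def] using this
    exact h1.add (h2.div_const 2)
  have hD : HasDerivAt (fun θ : ℝ => (1 + Real.cos θ) ^ 2 / Real.sqrt 3)
      ((2 * (1 + Real.cos θ) * (-Real.sin θ)) / Real.sqrt 3) θ := by
    have h3 : HasDerivAt (fun θ : ℝ => (1 + Real.cos θ) ^ 2)
        (2 * (1 + Real.cos θ) ^ 1 * (-Real.sin θ)) θ :=
      ((Real.hasDerivAt_cos θ).const_add 1).pow 2
    simpa using h3.div_const (Real.sqrt 3)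
  have hDne : (1 + Real.cos θ) ^ 2 / Real.sqrt 3 ≠ 0 := by
    apply div_ne_zero (pow_ne_zero 2 h) hs3
  have : HasDerivAt croftFrac _ θ := hN.div hD hDne
  convert this using 1
  have hc2 : Real.cos (2 * θ) = 1 - 2 * Real.sin θ ^ 2 := by
    rw [Real.cos_two_mul']; nlinarith [Real.sin_sq_add_cos_sq θ]
  have hsin2 : Real.sin (2 * θ) = 2 * Real.sin θ * Real.cos θ := Real.sin_two_mul θ
  rw [hc2, hsin2]
  have h3 : Real.sqrt 3 ^ 2 = 3 := Real.sq_sqrt (by norm_num)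
  field_simp
  linear_combination (0:ℝ) * h3

lemma cos_pos_of_mem (θ : ℝ) (hθ : θ ∈ Set.Icc (0:ℝ) (π/6)) : 0 < Real.cos θ := by
  have hpi := Real.pi_pos
  exact Real.cos_pos_of_mem_Ioo ⟨by linarith [hθ.1], by linarith [hθ.2]⟩

lemma g_mono : ∀ x ∈ Set.Icc (0:ℝ) (π/6), ∀ y ∈ Set.Icc (0:ℝ) (π/6), x < y →
    x + Real.sin x < y + Real.sin y := by
  have hpi := Real.pi_pos
  intro x hx y hy hxy
  have hs := Real.strictMonoOn_sin (a := x) (b := y)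
    ⟨by linarith [hx.1], by linarith [hx.2]⟩ ⟨by linarith [hy.1], by linarith [hy.2]⟩ hxy
  linarith

theorem croft_unique_interior_max :
    ∃ θstar ∈ Set.Ioo (0 : ℝ) (π / 6),
      deriv croftFrac θstar = 0 ∧
      (∀ θ ∈ Set.Ioo (0 : ℝ) (π / 6), deriv croftFrac θ = 0 → θ = θstar) ∧
      StrictMonoOn croftFrac (Set.Icc 0 θstar) ∧
      StrictAntiOn croftFrac (Set.Icc θstar (π / 6)) ∧
      IsMaxOn croftFrac (Set.Icc 0 (π / 6)) θstar := by
  have hpi := Real.pi_pos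
  have h06 : (0:ℝ) ≤ π/6 := by linarith
  -- existence of θ* with θ* + sin θ* = π/6
  obtain ⟨θs, hθs, hgθs⟩ : ∃ θs ∈ Set.Ioo (0:ℝ) (π/6), θs + Real.sin θs = π/6 := by
    have hcont : ContinuousOn (fun x : ℝ => x + Real.sin x) (Set.Icc 0 (π/6)) :=
      (continuous_id.add Real.continuous_sin).continuousOn
    have hsub := intermediate_value_Ioo h06 hcont
    have hmem : π/6 ∈ Set.Ioo ((fun x : ℝ => x + Real.sin x) 0)
        ((fun x : ℝ => x + Real.sin x) (π/6)) := by
      simp only [Real.sin_zero, Real.sin_pi_div_six]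
      constructor <;> (norm_num; try linarith)
    obtain ⟨θs, h1, h2⟩ := hsub hmem
    exact ⟨θs, h1, h2⟩
  -- derivative formula and basic positivity
  have hcpos : ∀ θ ∈ Set.Icc (0:ℝ) (π/6), (0:ℝ) < 1 + Real.cos θ := by
    intro θ hθ; linarith [cos_pos_of_mem θ hθ]
  have hderiv : ∀ θ ∈ Set.Icc (0:ℝ) (π/6),
      deriv croftFrac θ =
        2 * Real.sqrt 3 * Real.sin θ * (π / 6 - θ - Real.sin θ) / (1 + Real.cos θ) ^ 3 :=
    fun θ hθ => (croft_hasDerivAt θ (ne_of_gt (hcpos θ hθ))).deriv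
  have hsinpos : ∀ θ ∈ Set.Ioo (0:ℝ) (π/6), (0:ℝ) < Real.sin θ := by
    intro θ hθ
    exact Real.sin_pos_of_pos_of_lt_pi hθ.1 (by linarith [hθ.2])
  have hs3pos : (0:ℝ) < Real.sqrt 3 := by positivity
  -- sign of derivative
  have hdpos : ∀ θ ∈ Set.Ioo (0:ℝ) θs, 0 < deriv croftFrac θ := by
    intro θ hθ
    have hθ' : θ ∈ Set.Ioo (0:ℝ) (π/6) := ⟨hθ.1, lt_trans hθ.2 hθs.2⟩
    rw [hderiv θ (Set.mem_Icc_of_Ioo hθ')]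
    have hg := g_mono θ (Set.mem_Icc_of_Ioo hθ') θs (Set.mem_Icc_of_Ioo hθs) hθ.2
    have : 0 < π/6 - θ - Real.sin θ := by linarith
    have := hsinpos θ hθ'
    have := hcpos θ (Set.mem_Icc_of_Ioo hθ')
    positivity
  have hdneg : ∀ θ ∈ Set.Ioo θs (π/6), deriv croftFrac θ < 0 := by
    intro θ hθ
    have hθ' : θ ∈ Set.Ioo (0:ℝ) (π/6) := ⟨lt_trans hθs.1 hθ.1, hθ.2⟩
    rw [hderiv θ (Set.mem_Icc_of_Ioo hθ')]
    have hg := g_mono θs (Set.mem_Icc_of_Ioo hθs) θ (Set.mem_Icc_of_Ioo hθ') hθ.1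
    have h1 : π/6 - θ - Real.sin θ < 0 := by linarith
    have h2 := hsinpos θ hθ'
    have h3 := hcpos θ (Set.mem_Icc_of_Ioo hθ')
    apply div_neg_of_neg_of_pos
    · have hp : 0 < 2 * Real.sqrt 3 * Real.sin θ := by positivity
      nlinarith
    · positivity
  have hcont : ContinuousOn croftFrac (Set.Icc 0 (π/6)) := by
    intro x hx
    exact (croft_hasDerivAt x (ne_of_gt (hcpos x hx))).continuousAt.continuousWithinAt
  have hsub1 : Set.Icc (0:ℝ) θs ⊆ Set.Icc 0 (π/6) :=
    Set.Icc_subset_Icc le_rfl (le_of_lt hθs.2)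
  have hsub2 : Set.Icc θs (π/6) ⊆ Set.Icc 0 (π/6) :=
    Set.Icc_subset_Icc (le_of_lt hθs.1) le_rfl
  have hmono : StrictMonoOn croftFrac (Set.Icc 0 θs) := by
    apply strictMonoOn_of_deriv_pos (convex_Icc 0 θs) (hcont.mono hsub1)
    intro x hx
    rw [interior_Icc] at hx
    exact hdpos x hx
  have hanti : StrictAntiOn croftFrac (Set.Icc θs (π/6)) := by
    apply strictAntiOn_of_deriv_neg (convex_Icc θs (π/6)) (hcont.mono hsub2)
    intro x hx
    rw [interior_Icc] at hx
    exact hdneg x hx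
  refine ⟨θs, hθs, ?_, ?_, hmono, hanti, ?_⟩
  · rw [hderiv θs (Set.mem_Icc_of_Ioo hθs)]
    have : π/6 - θs - Real.sin θs = 0 := by linarith
    rw [this]; ring
  · intro θ hθ hd
    rcases lt_trichotomy θ θs with h | h | h
    · exact absurd hd (ne_of_gt (hdpos θ ⟨hθ.1, h⟩))
    · exact h
    · exact absurd hd (ne_of_lt (hdneg θ ⟨h, hθ.2⟩))
  · rw [isMaxOn_iff]
    intro x hx
    rcases le_total x θs with h | h
    · rcases eq_or_lt_of_le h with rfl | h'
      · exact le_rfl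
      · exact le_of_lt (hmono ⟨hx.1, h⟩ ⟨le_of_lt hθs.1, le_rfl⟩ h')
    · rcases eq_or_lt_of_le h with rfl | h'
      · exact le_rfl
      · exact le_of_lt (hanti ⟨le_rfl, le_of_lt hθs.2⟩ ⟨h, hx.2⟩ h')
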